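/- Let (X_i, p_i) and (Y_i, q_i) be sequences of pointed compact metric spaces converging in the Gromov–Hausdorff sense to compact metric spaces (X, p) and (Y, q) respectively. If f_i : X_i → Y_i are L-biLipschitz maps with f_i(p_i) = q_i for a fixed constant L ≥ 1, then there exists an L-biLipschitz map f : X → Y with f(p) = q. -/
import Mathlib


/-- `φ : X → Y` is a pointed `ε`-approximation: it sends the basepoint to the
basepoint, distorts distances by at most `ε` and has `ε`-dense image. -/
def IsPointedGHApprox {X Y : Type*} [MetricSpace X] [MetricSpace Y]
    (ε : ℝ) (p : X) (q : Y) (φ : X → Y) : Prop :=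
  φ p = q ∧ (∀ x x' : X, |dist (φ x) (φ x') - dist x x'| ≤ ε) ∧
    ∀ y : Y, ∃ x : X, dist (φ x) y ≤ ε

/-- A sequence of pointed compact metric spaces converges to a pointed compact
metric space in the Gromov–Hausdorff sense iff for every `ε > 0` there are
eventually pointed `ε`-approximations into the limit. -/
def PointedGHConverges {X : ℕ → Type*} [∀ i, MetricSpace (X i)]
    {Xlim : Type*} [MetricSpace Xlim] (p : ∀ i, X i) (plim : Xlim) : Prop :=
  ∀ ε > (0:ℝ), ∃ N : ℕ, ∀ i ≥ N, ∃ φ : X i → Xlim, IsPointedGHApprox ε (p i) plim φ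

/-- **convergence of L-biLipschitz maps.** If `(Xᵢ, pᵢ) → (X, p)` and
`(Yᵢ, qᵢ) → (Y, q)` are Gromov–Hausdorff convergent sequences of pointed compact
metric spaces and `fᵢ : Xᵢ → Yᵢ` are `L`-biLipschitz maps with `fᵢ(pᵢ) = qᵢ`
(`L ≥ 1` fixed), then there is an `L`-biLipschitz map `f : X → Y` with `f p = q`. -/
theorem bilipschitz_limit_of_pointedGH
    {X : ℕ → Type*} [∀ i, MetricSpace (X i)] [∀ i, CompactSpace (X i)]
    {Y : ℕ → Type*} [∀ i, MetricSpace (Y i)] [∀ i, CompactSpace (Y i)]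
    {Xlim : Type*} [MetricSpace Xlim] [CompactSpace Xlim] [Nonempty Xlim]
    {Ylim : Type*} [MetricSpace Ylim] [CompactSpace Ylim] [Nonempty Ylim]
    (p : ∀ i, X i) (plim : Xlim) (q : ∀ i, Y i) (qlim : Ylim)
    (hX : PointedGHConverges p plim) (hY : PointedGHConverges q qlim)
    (L : ℝ) (hL : 1 ≤ L) (f : ∀ i, X i → Y i)
    (hbase : ∀ i, f i (p i) = q i)
    (hbilip : ∀ i, ∀ x x' : X i,
      dist x x' / L ≤ dist (f i x) (f i x') ∧ dist (f i x) (f i x') ≤ L * dist x x') :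
    ∃ g : Xlim → Ylim, g plim = qlim ∧
      ∀ x x' : Xlim, dist x x' / L ≤ dist (g x) (g x') ∧ dist (g x) (g x') ≤ L * dist x x' := by
  classical
  have hL0 : (0:ℝ) < L := lt_of_lt_of_le one_pos hL
  -- Step 1: for every ε > 0 there is an "approximate" map with error 4*L*ε.
  have aux : ∀ ε : ℝ, 0 < ε → ∃ g : Xlim → Ylim, g plim = qlim ∧
      ∀ x x' : Xlim, dist x x' / L - 4*L*ε ≤ dist (g x) (g x') ∧
        dist (g x) (g x') ≤ L * dist x x' + 4*L*ε := by
    intro ε hε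
    obtain ⟨N₁, hN₁⟩ := hX ε hε
    obtain ⟨N₂, hN₂⟩ := hY ε hε
    set i := max N₁ N₂ with hi
    obtain ⟨φ, hφbase, hφdist, hφdense⟩ := hN₁ i (le_max_left _ _)
    obtain ⟨ψ, hψbase, hψdist, _⟩ := hN₂ i (le_max_right _ _)
    -- approximate inverse of φ, sending plim to p i
    set r : Xlim → X i := fun x => if h : x = plim then p i else (hφdense x).choose
      with hr_def
    have hr : ∀ x, dist (φ (r x)) x ≤ ε := by
      intro x
      by_cases h : x = plim
      · simp [hr_def, h, hφbase, le_of_lt hε]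
      · simpa [hr_def, h] using (hφdense x).choose_spec
    refine ⟨fun x => ψ (f i (r x)), ?_, ?_⟩
    · simp [hr_def, hbase, hψbase]
    · intro x x'
      set a := r x
      set a' := r x'
      -- |dist a a' - dist x x'| ≤ 3ε
      have h1 : |dist (φ a) (φ a') - dist a a'| ≤ ε := hφdist a a'
      have h2 : |dist (φ a) (φ a') - dist x x'| ≤ 2*ε := by
        have := dist_dist_dist_le (φ a) (φ a') x x'
        have hx := hr x
        have hx' := hr x'
        rw [Real.dist_eq] at this
        linarith
      have h3 : |dist a a' - dist x x'| ≤ 3*ε := by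
        rw [abs_sub_comm] at h1
        calc |dist a a' - dist x x'|
            ≤ |dist a a' - dist (φ a) (φ a')| + |dist (φ a) (φ a') - dist x x'| :=
              abs_sub_le _ _ _
          _ ≤ 3*ε := by linarith
      have h3l := neg_le_of_abs_le h3
      have h3u := le_of_abs_le h3
      have hb := hbilip i a a'
      have h4 : |dist (ψ (f i a)) (ψ (f i a')) - dist (f i a) (f i a')| ≤ ε :=
        hψdist _ _
      have h4l := neg_le_of_abs_le h4
      have h4u := le_of_abs_le h4
      constructor
      · have key : dist x x' / L ≤ dist a a' / L + 3*ε := by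
          have h6 : dist x x' / L ≤ (dist a a' + 3*ε) / L := by
            gcongr
            linarith
          have h7 : (dist a a' + 3*ε) / L = dist a a' / L + 3*ε/L := add_div _ _ _
          have h8 : 3*ε/L ≤ 3*ε := by
            rw [div_le_iff₀ hL0]; nlinarith
          linarith
        nlinarith [hb.1]
      · have : dist (f i a) (f i a') ≤ L * dist a a' := hb.2
        nlinarith
  -- Step 2: extract a limit along an ultrafilter.
  have aux2 : ∀ n : ℕ, ∃ g : Xlim → Ylim, g plim = qlim ∧
      ∀ x x' : Xlim, dist x x' / L - 4*L*(1/(n+1)) ≤ dist (g x) (g x') ∧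
        dist (g x) (g x') ≤ L * dist x x' + 4*L*(1/(n+1)) :=
    fun n => aux (1/(n+1)) (by positivity)
  choose G hGbase hGd using aux2
  set 𝒰 : Ultrafilter ℕ := Ultrafilter.of Filter.atTop with h𝒰def
  have h𝒰 : (𝒰 : Filter ℕ) ≤ Filter.atTop := Ultrafilter.of_le _
  set g : Xlim → Ylim := fun x => (𝒰.map (fun n => G n x)).lim with hgdef
  have hconv : ∀ x, Filter.Tendsto (fun n => G n x) 𝒰 (nhds (g x)) := by
    intro x
    exact Ultrafilter.le_nhds_lim _
  have hc : Filter.Tendsto (fun n : ℕ => 4*L*(1/(n+1):ℝ)) (𝒰 : Filter ℕ) (nhds 0) := by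
    have h0 : Filter.Tendsto (fun n : ℕ => (1/(n+1):ℝ)) Filter.atTop (nhds 0) :=
      tendsto_one_div_add_atTop_nhds_zero_nat
    have := (h0.const_mul (4*L)).mono_left h𝒰
    simpa using this
  refine ⟨g, ?_, ?_⟩
  · have h1 : Filter.Tendsto (fun n => G n plim) 𝒰 (nhds qlim) := by
      have : (fun n => G n plim) = fun _ => qlim := funext fun n => hGbase n
      rw [this]; exact tendsto_const_nhds
    exact tendsto_nhds_unique (hconv plim) h1
  · intro x x'
    have hd : Filter.Tendsto (fun n => dist (G n x) (G n x')) 𝒰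
        (nhds (dist (g x) (g x'))) := (hconv x).dist (hconv x')
    constructor
    · have hlow : Filter.Tendsto (fun n : ℕ => dist x x' / L - 4*L*(1/(n+1):ℝ)) 𝒰
          (nhds (dist x x' / L)) := by
        have := (tendsto_const_nhds :
          Filter.Tendsto (fun _ : ℕ => dist x x' / L) 𝒰 (nhds (dist x x' / L))).sub hc
        simpa using this
      exact le_of_tendsto_of_tendsto' hlow hd (fun n => (hGd n x x').1)
    · have hup : Filter.Tendsto (fun n : ℕ => L * dist x x' + 4*L*(1/(n+1):ℝ)) 𝒰
          (nhds (L * dist x x')) := by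
        have := (tendsto_const_nhds :
          Filter.Tendsto (fun _ : ℕ => L * dist x x') 𝒰 (nhds (L * dist x x'))).add hc
        simpa using this
      exact le_of_tendsto_of_tendsto' hd hup (fun n => (hGd n x x').2)
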